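/- Let p be an odd prime, n with p ∤ 2n, α a primitive 2n-th root of unity over F_p, and t ≥ 1. If g(x) is a divisor of x^n + 1 in F_p[x] with g(α) = g(α^3) = ··· = g(α^{2t-1}) = 0, then the negacyclic code of length n generated by g(x) has minimum Lee weight at least min(p, 2t+1). -/

import Mathlib

open Polynomial

/-- Lee weight of an element of `ZMod p`. -/
def leeWt (p : ℕ) (x : ZMod p) : ℕ := min x.val (p - x.val)

/-- Lee weight of a vector. -/
def leeWtV (p n : ℕ) (x : Fin n → ZMod p) : ℕ := ∑ i, leeWt p (x i)

/-- The polynomial `∑ vᵢ Xⁱ` of degree `< n` associated to a vector. -/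
noncomputable def vecPoly (p n : ℕ) (v : Fin n → ZMod p) : (ZMod p)[X] :=
  ∑ i : Fin n, C (v i) * X ^ (i : ℕ)

/-- The negacyclic code of length `n` with generator polynomial `g`. -/
noncomputable def negacyclicCode (p n : ℕ) (g : (ZMod p)[X]) :
    Submodule (ZMod p) (Fin n → ZMod p) where
  carrier := {v | g ∣ vecPoly p n v}
  add_mem' := by
    intro a b ha hb
    have h : vecPoly p n (a + b) = vecPoly p n a + vecPoly p n b := by
      simp [vecPoly, Finset.sum_add_distrib, add_mul]
    simpa [Set.mem_setOf_eq, h] using dvd_add ha hb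
  zero_mem' := by simp [vecPoly]
  smul_mem' := by
    intro c v hv
    have h : vecPoly p n (c • v) = C c * vecPoly p n v := by
      simp [vecPoly, Finset.mul_sum, mul_assoc]
    simpa [Set.mem_setOf_eq, h] using Dvd.dvd.mul_left hv (C c)


lemma derivFinsetProd {K : Type*} [CommRing K] {ι : Type*} [DecidableEq ι]
    (s : Finset ι) (f : ι → K[X]) :
    derivative (∏ l ∈ s, f l) = ∑ l ∈ s, (∏ k ∈ s.erase l, f k) * derivative (f l) := by
  classical
  induction s using Finset.induction_on with
  | empty => simp
  | @insert a s ha ih =>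
    rw [Finset.prod_insert ha, derivative_mul, ih, Finset.sum_insert ha,
      Finset.erase_insert ha, Finset.mul_sum]
    congr 1
    · ring
    · refine Finset.sum_congr rfl fun i hi => ?_
      rw [Finset.erase_insert_of_ne (by rintro rfl; exact ha hi),
        Finset.prod_insert (fun h => ha (Finset.mem_of_mem_erase h))]
      ring

lemma keyIdentity {K : Type*} [CommRing K] {ι : Type*} [DecidableEq ι]
    (s : Finset ι) (γ : ι → K) :
    derivative (∏ l ∈ s, (1 - C (γ l) * X)) * (∏ l ∈ s, (1 + C (γ l) * X))
      - derivative (∏ l ∈ s, (1 + C (γ l) * X)) * (∏ l ∈ s, (1 - C (γ l) * X))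
      = ∑ l ∈ s, (-(2 : K[X]) * C (γ l)) * ∏ k ∈ s.erase l, (1 - C (γ k) ^ 2 * X ^ 2) := by
  rw [derivFinsetProd, derivFinsetProd, Finset.sum_mul, Finset.sum_mul,
    ← Finset.sum_sub_distrib]
  refine Finset.sum_congr rfl fun l hl => ?_
  have h1 : ∏ k ∈ s, (1 + C (γ k) * X) = (1 + C (γ l) * X) * ∏ k ∈ s.erase l, (1 + C (γ k) * X) :=
    (Finset.mul_prod_erase s _ hl).symm
  have h2 : ∏ k ∈ s, (1 - C (γ k) * X) = (1 - C (γ l) * X) * ∏ k ∈ s.erase l, (1 - C (γ k) * X) :=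
    (Finset.mul_prod_erase s _ hl).symm
  have h3 : ∏ k ∈ s.erase l, (1 - C (γ k) ^ 2 * X ^ 2)
      = (∏ k ∈ s.erase l, (1 - C (γ k) * X)) * ∏ k ∈ s.erase l, (1 + C (γ k) * X) := by
    rw [← Finset.prod_mul_distrib]
    exact Finset.prod_congr rfl fun k _ => by ring
  have hd1 : derivative (1 - C (γ l) * X) = - C (γ l) := by
    simp
  have hd2 : derivative (1 + C (γ l) * X) = C (γ l) := by
    simp
  rw [h1, h2, hd1, hd2, h3]
  ring

lemma keyDvd {K : Type*} [CommRing K] {ι : Type*} [DecidableEq ι]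
    (s : Finset ι) (γ : ι → K) (t : ℕ)
    (hS : ∀ i < t, ∑ l ∈ s, γ l ^ (2 * i + 1) = 0) :
    (X : K[X]) ^ (2 * t) ∣
      derivative (∏ l ∈ s, (1 - C (γ l) * X)) * (∏ l ∈ s, (1 + C (γ l) * X))
        - derivative (∏ l ∈ s, (1 + C (γ l) * X)) * (∏ l ∈ s, (1 - C (γ l) * X)) := by
  rw [keyIdentity]
  have hdecomp : ∑ l ∈ s, (-(2 : K[X]) * C (γ l)) * ∏ k ∈ s.erase l, (1 - C (γ k) ^ 2 * X ^ 2)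
      = (∏ k ∈ s, (1 - C (γ k) ^ 2 * X ^ 2)) *
          (∑ l ∈ s, (-(2 : K[X]) * C (γ l)) * ∑ i ∈ Finset.range t, (C (γ l) ^ 2 * X ^ 2) ^ i)
        + X ^ (2 * t) * ∑ l ∈ s, (-(2 : K[X]) * C (γ l)) * C (γ l) ^ (2 * t) *
            ∏ k ∈ s.erase l, (1 - C (γ k) ^ 2 * X ^ 2) := by
    rw [Finset.mul_sum, Finset.mul_sum, ← Finset.sum_add_distrib]
    refine Finset.sum_congr rfl fun l hl => ?_
    have hXt : (C (γ l) ^ 2 * X ^ 2) ^ t = C (γ l) ^ (2 * t) * X ^ (2 * t) := by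
      rw [mul_pow, ← pow_mul, ← pow_mul]
    have hgeom : (1 - C (γ l) ^ 2 * X ^ 2) * (∑ i ∈ Finset.range t, (C (γ l) ^ 2 * X ^ 2) ^ i)
        = 1 - C (γ l) ^ (2 * t) * X ^ (2 * t) := by
      rw [← hXt]
      linear_combination - geom_sum_mul (C (γ l) ^ 2 * X ^ 2) t
    have herase : (1 - C (γ l) ^ 2 * X ^ 2) * ∏ k ∈ s.erase l, (1 - C (γ k) ^ 2 * X ^ 2)
        = ∏ k ∈ s, (1 - C (γ k) ^ 2 * X ^ 2) :=
      Finset.mul_prod_erase s (fun k => 1 - C (γ k) ^ 2 * X ^ 2) hl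
    rw [← herase]
    linear_combination ((2 : K[X]) * C (γ l)) *
      (∏ k ∈ s.erase l, (1 - C (γ k) ^ 2 * X ^ 2)) * hgeom
  rw [hdecomp]
  apply dvd_add
  · have hzero : (∑ l ∈ s, (-(2 : K[X]) * C (γ l)) *
        ∑ i ∈ Finset.range t, (C (γ l) ^ 2 * X ^ 2) ^ i) = 0 := by
      have hterm : ∀ l ∈ s, (-(2 : K[X]) * C (γ l)) *
          ∑ i ∈ Finset.range t, (C (γ l) ^ 2 * X ^ 2) ^ i
          = ∑ i ∈ Finset.range t, (-(2 : K[X])) * (C (γ l ^ (2 * i + 1)) * X ^ (2 * i)) := by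
        intro l _
        rw [Finset.mul_sum]
        refine Finset.sum_congr rfl fun i _ => ?_
        rw [map_pow]
        ring
      rw [Finset.sum_congr rfl hterm, Finset.sum_comm]
      refine Finset.sum_eq_zero fun i hi => ?_
      have : ∑ l ∈ s, C (γ l ^ (2 * i + 1)) = (0 : K[X]) := by
        rw [← map_sum, hS i (Finset.mem_range.mp hi), map_zero]
      calc ∑ l ∈ s, (-(2 : K[X])) * (C (γ l ^ (2 * i + 1)) * X ^ (2 * i))
          = (-(2 : K[X])) * ((∑ l ∈ s, C (γ l ^ (2 * i + 1))) * X ^ (2 * i)) := by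
            rw [Finset.sum_mul, Finset.mul_sum]
        _ = 0 := by rw [this, zero_mul, mul_zero]
    rw [hzero, mul_zero]
    exact dvd_zero _
  · exact dvd_mul_right _ _

lemma lemC {K : Type*} [Field K] (P Q : Polynomial K) (m : ℕ)
    (hP : P.natDegree ≤ m) (hQ : Q.natDegree ≤ m)
    (hP0 : P.coeff 0 = 1) (hQ0 : Q.coeff 0 = 1)
    (hk : ∀ k : ℕ, 1 ≤ k → k ≤ m → (k : K) ≠ 0)
    (h : ∀ j < m, (derivative P * Q - derivative Q * P).coeff j = 0) : P = Q := by
  have key : ∀ k, k ≤ m → P.coeff k = Q.coeff k := by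
    intro k
    induction k using Nat.strong_induction_on with
    | _ k ih =>
      intro hkm
      rcases Nat.eq_zero_or_pos k with rfl | hkpos
      · rw [hP0, hQ0]
      · obtain ⟨j, rfl⟩ : ∃ j, k = j + 1 := ⟨k - 1, by omega⟩
        have hc := h j (by omega)
        rw [coeff_sub, coeff_mul, coeff_mul, ← Finset.sum_sub_distrib] at hc
        have hterm : ∀ x ∈ Finset.HasAntidiagonal.antidiagonal j, x ≠ ((j, 0) : ℕ × ℕ) →
            (derivative P).coeff x.1 * Q.coeff x.2 - (derivative Q).coeff x.1 * P.coeff x.2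
              = 0 := by
          intro x hx hne
          have hx' : x.1 + x.2 = j := Finset.HasAntidiagonal.mem_antidiagonal.mp hx
          have h1 : x.1 < j := by
            rcases Nat.lt_or_ge x.1 j with h' | h'
            · exact h'
            · exfalso; apply hne
              have e1 : x.1 = j := by omega
              have e2 : x.2 = 0 := by omega
              exact Prod.ext e1 e2
          rw [coeff_derivative, coeff_derivative]
          have e1 : P.coeff (x.1 + 1) = Q.coeff (x.1 + 1) := ih (x.1 + 1) (by omega) (by omega)
          have e2 : P.coeff x.2 = Q.coeff x.2 := ih x.2 (by omega) (by omega)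
          rw [e1, e2]; ring
        rw [Finset.sum_eq_single_of_mem ((j, 0) : ℕ × ℕ)
          (Finset.HasAntidiagonal.mem_antidiagonal.mpr (by omega)) hterm] at hc
        rw [coeff_derivative, coeff_derivative, hP0, hQ0, mul_one, mul_one] at hc
        have hne : ((j : K) + 1) ≠ 0 := by
          have := hk (j + 1) (by omega) (by omega)
          push_cast at this
          exact this
        have h2 : (P.coeff (j + 1) - Q.coeff (j + 1)) * ((j : K) + 1) = 0 := by
          linear_combination hc
        rcases mul_eq_zero.mp h2 with h3 | h3
        · exact sub_eq_zero.mp h3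
        · exact absurd h3 hne
  refine Polynomial.ext fun k => ?_
  rcases le_or_gt k m with hkm | hkm
  · exact key k hkm
  · rw [coeff_eq_zero_of_natDegree_lt (lt_of_le_of_lt hP hkm),
      coeff_eq_zero_of_natDegree_lt (lt_of_le_of_lt hQ hkm)]

/-- Berlekamp's bound: a negacyclic code whose generator vanishes at
`α, α³, …, α^(2t-1)` has minimum Lee weight at least `min p (2t+1)`. -/
theorem stmt18 (p n t : ℕ) [Fact (Nat.Prime p)] (hodd : Odd p) (hn : 0 < n)
    (hdvd : ¬ p ∣ 2 * n) (ht : 1 ≤ t)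
    (α : AlgebraicClosure (ZMod p)) (hα : IsPrimitiveRoot α (2 * n))
    (g : (ZMod p)[X]) (hg : g ∣ (X : (ZMod p)[X]) ^ n + 1)
    (hroots : ∀ j, 1 ≤ j → j ≤ t → Polynomial.aeval (α ^ (2 * j - 1)) g = 0) :
    ∀ v ∈ negacyclicCode p n g, v ≠ 0 → min p (2 * t + 1) ≤ leeWtV p n v := by
  intro v hv hv0
  by_contra hcon
  push_neg at hcon
  rw [lt_min_iff] at hcon
  obtain ⟨hltp, hlt2t⟩ := hcon
  classical
  have hppos : 0 < p := (Fact.out (p := p.Prime)).pos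
  have hcast : ∀ k : ℕ, 0 < k → k < p → (k : AlgebraicClosure (ZMod p)) ≠ 0 := by
    intro k h1 h2 hzero
    have hmap : (algebraMap (ZMod p) (AlgebraicClosure (ZMod p))) ((k : ZMod p)) = (k : AlgebraicClosure (ZMod p)) := map_natCast _ k
    have hz : ((k : ZMod p)) = 0 := by
      apply (algebraMap (ZMod p) (AlgebraicClosure (ZMod p))).injective
      rw [hmap, hzero, map_zero]
    have hdk := (ZMod.natCast_eq_zero_iff k p).mp hz
    have := Nat.le_of_dvd h1 hdk
    omega
  have hp2 : (2 : AlgebraicClosure (ZMod p)) ≠ 0 := by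
    have h3 : 2 < p := by
      have := (Fact.out (p := p.Prime)).two_le
      rcases hodd with ⟨c, hc⟩; omega
    have := hcast 2 (by norm_num) h3
    simpa using this
  have hα0 : α ≠ 0 := by
    intro h
    have h2 := hα.pow_eq_one
    rw [h, zero_pow (by omega : 2 * n ≠ 0)] at h2
    exact zero_ne_one h2
  have hαn : α ^ n = -1 := by
    have h2 : α ^ n * α ^ n = 1 := by
      rw [← pow_add]
      have h3 : n + n = 2 * n := by omega
      rw [h3, hα.pow_eq_one]
    rcases mul_self_eq_one_iff.mp h2 with h | h
    · exact absurd h (hα.pow_ne_one_of_pos_of_lt hn.ne' (by omega))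
    · exact h
  set w : Fin n → ℕ := fun i => leeWt p (v i) with hw
  set δ : Fin n → AlgebraicClosure (ZMod p) := fun i => if (v i).val ≤ (p - 1) / 2 then 1 else -1 with hδdef
  have hδ : ∀ i, δ i = 1 ∨ δ i = -1 := by
    intro i; rw [hδdef]; dsimp only; split
    · exact Or.inl rfl
    · exact Or.inr rfl
  have hδ0 : ∀ i, δ i ≠ 0 := by
    intro i; rcases hδ i with h | h <;> rw [h] <;> simp
  have hpodd : p % 2 = 1 := Nat.odd_iff.mp hodd
  have hwδ : ∀ i : Fin n, ((w i : ℕ) : AlgebraicClosure (ZMod p)) * δ i = algebraMap (ZMod p) (AlgebraicClosure (ZMod p)) (v i) := by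
    intro i
    have hval : (v i).val < p := ZMod.val_lt _
    have hvc : (algebraMap (ZMod p) (AlgebraicClosure (ZMod p))) (v i) = (((v i).val : ℕ) : AlgebraicClosure (ZMod p)) := by
      conv_lhs => rw [← ZMod.natCast_zmod_val (v i)]
      rw [map_natCast]
    simp only [hw, hδdef, leeWt]
    split
    · rename_i hcond
      have hmin : min (v i).val (p - (v i).val) = (v i).val := by omega
      rw [hmin, mul_one, hvc]
    · rename_i hcond
      push_neg at hcond
      have hmin : min (v i).val (p - (v i).val) = p - (v i).val := by omega
      rw [hmin, hvc]
      have hcast2 : ((p - (v i).val : ℕ) : AlgebraicClosure (ZMod p)) = (p : AlgebraicClosure (ZMod p)) - (((v i).val : ℕ) : AlgebraicClosure (ZMod p)) :=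
        Nat.cast_sub hval.le
      have hpK : (p : AlgebraicClosure (ZMod p)) = 0 := by
        rw [← map_natCast (algebraMap (ZMod p) (AlgebraicClosure (ZMod p))) p, ZMod.natCast_self, map_zero]
      rw [hcast2, hpK]
      ring
  set S : Finset ((_ : Fin n) × ℕ) := Finset.univ.sigma (fun i => Finset.range (w i)) with hSdef
  set Γ : ((_ : Fin n) × ℕ) → AlgebraicClosure (ZMod p) := fun l => δ l.1 * α ^ (l.1 : ℕ) with hΓ
  have hScard : S.card = leeWtV p n v := by
    simp only [hSdef, Finset.card_sigma, Finset.card_range, hw, leeWtV, leeWt]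
  have hev : ∀ i < t, (aeval (α ^ (2 * i + 1))) (vecPoly p n v) = 0 := by
    intro i hi
    have hdv : g ∣ vecPoly p n v := hv
    obtain ⟨c, hc⟩ := hdv
    have hg0 := hroots (i + 1) (by omega) (by omega)
    have h2 : 2 * (i + 1) - 1 = 2 * i + 1 := by omega
    rw [h2] at hg0
    rw [hc, map_mul, hg0, zero_mul]
  have hpow : ∀ i < t, ∑ l ∈ S, Γ l ^ (2 * i + 1) = 0 := by
    intro i hi
    simp only [hSdef, hΓ]
    rw [Finset.sum_sigma]
    have hterm : ∀ i' : Fin n, ∑ _j ∈ Finset.range (w i'), (δ i' * α ^ (i' : ℕ)) ^ (2 * i + 1)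
        = algebraMap (ZMod p) (AlgebraicClosure (ZMod p)) (v i') * (α ^ (2 * i + 1)) ^ (i' : ℕ) := by
      intro i'
      rw [Finset.sum_const, Finset.card_range, nsmul_eq_mul]
      have hδpow : δ i' ^ (2 * i + 1) = δ i' := by
        rcases hδ i' with h | h <;> rw [h]
        · exact one_pow _
        · exact Odd.neg_one_pow ⟨i, by ring⟩
      have e : (δ i' * α ^ (i' : ℕ)) ^ (2 * i + 1) = δ i' * (α ^ (2 * i + 1)) ^ (i' : ℕ) := by
        rw [mul_pow, hδpow, ← pow_mul, ← pow_mul, Nat.mul_comm]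
      rw [e, ← hwδ i']
      ring
    calc ∑ i' : Fin n, ∑ _j ∈ Finset.range (w i'), (δ i' * α ^ (i' : ℕ)) ^ (2 * i + 1)
        = ∑ i' : Fin n, algebraMap (ZMod p) (AlgebraicClosure (ZMod p)) (v i') * (α ^ (2 * i + 1)) ^ (i' : ℕ) :=
          Finset.sum_congr rfl fun i' _ => hterm i'
      _ = (aeval (α ^ (2 * i + 1))) (vecPoly p n v) := by
          rw [vecPoly, map_sum]
          exact Finset.sum_congr rfl fun i' _ => by simp
      _ = 0 := hev i hi
  set Pp : (AlgebraicClosure (ZMod p))[X] := ∏ l ∈ S, (1 - C (Γ l) * X) with hPp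
  set Qp : (AlgebraicClosure (ZMod p))[X] := ∏ l ∈ S, (1 + C (Γ l) * X) with hQp
  have hdeg1 : ∀ a : AlgebraicClosure (ZMod p), (1 - C a * X).natDegree ≤ 1 := fun a =>
    le_trans (natDegree_sub_le _ _)
      (max_le (by simp) ((natDegree_C_mul_le _ _).trans natDegree_X.le))
  have hdeg2 : ∀ a : AlgebraicClosure (ZMod p), (1 + C a * X).natDegree ≤ 1 := fun a =>
    le_trans (natDegree_add_le _ _)
      (max_le (by simp) ((natDegree_C_mul_le _ _).trans natDegree_X.le))
  have hdegP : Pp.natDegree ≤ S.card := by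
    rw [hPp]
    refine le_trans (Polynomial.natDegree_prod_le _ _) ?_
    rw [Finset.card_eq_sum_ones]
    exact Finset.sum_le_sum fun l _ => hdeg1 _
  have hdegQ : Qp.natDegree ≤ S.card := by
    rw [hQp]
    refine le_trans (Polynomial.natDegree_prod_le _ _) ?_
    rw [Finset.card_eq_sum_ones]
    exact Finset.sum_le_sum fun l _ => hdeg2 _
  have hP0 : Pp.coeff 0 = 1 := by
    rw [hPp, Polynomial.coeff_zero_eq_eval_zero, Polynomial.eval_prod]
    exact Finset.prod_eq_one fun l _ => by simp
  have hQ0 : Qp.coeff 0 = 1 := by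
    rw [hQp, Polynomial.coeff_zero_eq_eval_zero, Polynomial.eval_prod]
    exact Finset.prod_eq_one fun l _ => by simp
  have hm2t : S.card ≤ 2 * t := by rw [hScard]; omega
  have hmp : S.card < p := by rw [hScard]; omega
  have hPQ : Pp = Qp := by
    refine lemC Pp Qp S.card hdegP hdegQ hP0 hQ0 ?_ ?_
    · intro k h1 h2
      exact hcast k h1 (by omega)
    · intro j hj
      have hdvd2 := keyDvd S Γ t hpow
      rw [← hPp, ← hQp] at hdvd2
      exact (Polynomial.X_pow_dvd_iff.mp hdvd2) j (by omega)
  obtain ⟨i₀, hi₀⟩ : ∃ i, v i ≠ 0 := by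
    by_contra hno; push_neg at hno; exact hv0 (funext hno)
  have hw₀ : 0 < w i₀ := by
    have h1 : (v i₀).val ≠ 0 := fun h => hi₀ ((ZMod.val_eq_zero _).mp h)
    have h2 : (v i₀).val < p := ZMod.val_lt _
    simp only [hw, leeWt]
    omega
  have hl₀ : (⟨i₀, 0⟩ : (_ : Fin n) × ℕ) ∈ S := by
    rw [hSdef]
    exact Finset.mem_sigma.mpr ⟨Finset.mem_univ _, Finset.mem_range.mpr hw₀⟩
  have hΓ0 : ∀ l : ((_ : Fin n) × ℕ), Γ l ≠ 0 := by
    intro l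
    rw [hΓ]
    exact mul_ne_zero (hδ0 l.1) (pow_ne_zero _ hα0)
  have hPx : Pp.eval (Γ ⟨i₀, 0⟩)⁻¹ = 0 := by
    rw [hPp, Polynomial.eval_prod]
    refine Finset.prod_eq_zero hl₀ ?_
    simp [mul_inv_cancel₀ (hΓ0 ⟨i₀, 0⟩)]
  have hQx : Qp.eval (Γ ⟨i₀, 0⟩)⁻¹ = 0 := by rw [← hPQ]; exact hPx
  rw [hQp, Polynomial.eval_prod, Finset.prod_eq_zero_iff] at hQx
  obtain ⟨l, hlS, hl⟩ := hQx
  have hem : Γ l = - Γ ⟨i₀, 0⟩ := by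
    have h1 : 1 + Γ l * (Γ ⟨i₀, 0⟩)⁻¹ = 0 := by simpa using hl
    have h3 : (1 + Γ l * (Γ ⟨i₀, 0⟩)⁻¹) * Γ ⟨i₀, 0⟩ = 0 := by rw [h1, zero_mul]
    rw [add_mul, one_mul, mul_assoc, inv_mul_cancel₀ (hΓ0 ⟨i₀, 0⟩), mul_one] at h3
    linear_combination h3
  rw [hΓ] at hem
  dsimp only at hem
  have hlt1 : (l.1 : ℕ) < n := l.1.isLt
  have hlt0 : (i₀ : ℕ) < n := i₀.isLt
  rcases hδ l.1 with h1 | h1 <;> rcases hδ i₀ with h2 | h2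
  · rw [h1, h2] at hem
    have heq : α ^ (l.1 : ℕ) = α ^ ((i₀ : ℕ) + n) := by
      rw [pow_add, hαn]
      linear_combination hem
    have := hα.pow_inj (by omega) (by omega) heq
    omega
  · rw [h1, h2] at hem
    have heq : α ^ (l.1 : ℕ) = α ^ (i₀ : ℕ) := by linear_combination hem
    have hv12 := hα.pow_inj (by omega) (by omega) heq
    have he : l.1 = i₀ := Fin.ext hv12
    rw [he, h2] at h1
    exact hp2 (by linear_combination - h1)
  · rw [h1, h2] at hem
    have heq : α ^ (l.1 : ℕ) = α ^ (i₀ : ℕ) := by linear_combination - hem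
    have hv12 := hα.pow_inj (by omega) (by omega) heq
    have he : l.1 = i₀ := Fin.ext hv12
    rw [he, h2] at h1
    exact hp2 (by linear_combination h1)
  · rw [h1, h2] at hem
    have heq : α ^ (l.1 : ℕ) = α ^ ((i₀ : ℕ) + n) := by
      rw [pow_add, hαn]
      linear_combination - hem
    have := hα.pow_inj (by omega) (by omega) heq
    omega
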